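/- For every integer n ≥ 4, every even permutation in Sym(n) is a product of two n-cycles; in particular, every even permutation is a product of two derangements. -/

import Mathlib

open Equiv Equiv.Perm List Finset

namespace TwoNC

variable {n : ℕ}

/-- minimal representatives of the orbits (cycles, incl. fixed points) of a permutation -/
def reps (b : Perm (Fin n)) : Finset (Fin n) :=
  Finset.univ.filter fun x => ∀ y, b.SameCycle x y → x ≤ y

lemma mem_reps {b : Perm (Fin n)} {x : Fin n} :
    x ∈ reps b ↔ ∀ y, b.SameCycle x y → x ≤ y := by
  simp [reps]

lemma eq_of_fixed_sameCycle {b : Perm (Fin n)} {x y : Fin n} (h : b x = x)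
    (hxy : b.SameCycle x y) : x = y := by
  obtain ⟨i, hi⟩ := hxy
  rw [zpow_apply_eq_self_of_apply_eq_self h] at hi
  exact hi

lemma exists_rep (b : Perm (Fin n)) (x : Fin n) : ∃ z ∈ reps b, b.SameCycle z x := by
  classical
  set C := Finset.univ.filter (fun y => b.SameCycle x y) with hC
  have hxC : x ∈ C := Finset.mem_filter.2 ⟨Finset.mem_univ _, Equiv.Perm.SameCycle.rfl⟩
  have hne : C.Nonempty := ⟨x, hxC⟩
  have hmin : b.SameCycle x (C.min' hne) := by
    have := C.min'_mem hne; simp only [hC, Finset.mem_filter] at this; exact this.2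
  refine ⟨C.min' hne, ?_, hmin.symm⟩
  rw [mem_reps]
  intro y hy
  have : y ∈ C := by
    simp only [hC, Finset.mem_filter]
    exact ⟨Finset.mem_univ _, hmin.trans hy⟩
  exact C.min'_le y this

lemma reps_eq_of_sameCycle {b : Perm (Fin n)} {x y : Fin n} (hx : x ∈ reps b)
    (hy : y ∈ reps b) (h : b.SameCycle x y) : x = y :=
  le_antisymm (mem_reps.1 hx y h) (mem_reps.1 hy x h.symm)

lemma card_reps (b : Perm (Fin n)) :
    (reps b).card = (n - b.support.card) + b.cycleFactorsFinset.card := by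
  classical
  have hsplit : reps b = (Finset.univ \ b.support) ∪ ((reps b) ∩ b.support) := by
    ext x
    constructor
    · intro hx
      by_cases hxs : x ∈ b.support
      · exact Finset.mem_union_right _ (Finset.mem_inter.2 ⟨hx, hxs⟩)
      · exact Finset.mem_union_left _ (Finset.mem_sdiff.2 ⟨Finset.mem_univ _, hxs⟩)
    · intro hx
      rcases Finset.mem_union.1 hx with h | h
      · have hfix : b x = x := by
          have := (Finset.mem_sdiff.1 h).2
          rwa [Equiv.Perm.notMem_support] at this
        rw [mem_reps]
        intro y hy
        exact le_of_eq (eq_of_fixed_sameCycle hfix hy)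
      · exact (Finset.mem_inter.1 h).1
  have hdisj : Disjoint (Finset.univ \ b.support) ((reps b) ∩ b.support) := by
    rw [Finset.disjoint_left]
    intro x hx hx'
    exact (Finset.mem_sdiff.1 hx).2 (Finset.mem_inter.1 hx').2
  have hbij : ((reps b) ∩ b.support).card = b.cycleFactorsFinset.card := by
    apply Finset.card_bij (fun x _ => b.cycleOf x)
    · intro x hx
      exact Equiv.Perm.cycleOf_mem_cycleFactorsFinset_iff.2 (Finset.mem_inter.1 hx).2
    · intro x hx y hy hxy
      have hysupp : y ∈ (b.cycleOf y).support :=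
        Equiv.Perm.mem_support_cycleOf_iff.2 ⟨Equiv.Perm.SameCycle.rfl, (Finset.mem_inter.1 hy).2⟩
      rw [← hxy] at hysupp
      have hsc : b.SameCycle x y := (Equiv.Perm.mem_support_cycleOf_iff.1 hysupp).1
      exact reps_eq_of_sameCycle (Finset.mem_inter.1 hx).1 (Finset.mem_inter.1 hy).1 hsc
    · intro c hc
      have hccyc : c.IsCycle := (Equiv.Perm.mem_cycleFactorsFinset_iff.1 hc).1
      obtain ⟨x0, hx0⟩ := hccyc.nonempty_support
      have hx0b : x0 ∈ b.support := Equiv.Perm.mem_cycleFactorsFinset_support_le hc hx0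
      have hceq : c = b.cycleOf x0 := Equiv.Perm.cycle_is_cycleOf hx0 hc
      obtain ⟨z, hz, hzsc⟩ := exists_rep b x0
      have hzb : z ∈ b.support := (hzsc.mem_support_iff).2 hx0b
      refine ⟨z, Finset.mem_inter.2 ⟨hz, hzb⟩, ?_⟩
      rw [hceq, hzsc.cycleOf_eq]
  rw [hsplit, Finset.card_union_of_disjoint hdisj, hbij,
    Finset.card_sdiff_of_subset (Finset.subset_univ _), Finset.card_univ, Fintype.card_fin]

lemma odd_card_reps {b : Perm (Fin n)} (hn : 2 ≤ n)
    (hsign : Equiv.Perm.sign b = (-1 : ℤˣ) ^ (n + 1)) : Odd (reps b).card := by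
  classical
  have hct : Multiset.card b.cycleType = b.cycleFactorsFinset.card := by
    simp [Equiv.Perm.cycleType]
  have hsgn : Equiv.Perm.sign b
      = (-1 : ℤˣ) ^ (b.support.card + b.cycleFactorsFinset.card) := by
    rw [Equiv.Perm.sign_of_cycleType, Equiv.Perm.sum_cycleType, hct]
  have h2 : ((-1 : ℤˣ)) ^ (n + 1) = (-1 : ℤˣ) ^ (b.support.card + b.cycleFactorsFinset.card) := by
    rw [← hsign, hsgn]
  have h3 : ((-1 : ℤˣ)) ^ ((n + 1) + (b.support.card + b.cycleFactorsFinset.card)) = 1 := by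
    rw [pow_add, h2, ← sq, ← pow_mul, pow_mul']
    norm_num
  have h4 : Even ((n + 1) + (b.support.card + b.cycleFactorsFinset.card)) :=
    (neg_one_pow_eq_one_iff_even (by decide)).1 h3
  have h5 := card_reps b
  have h6 : b.support.card ≤ n := by
    simpa using Finset.card_le_univ b.support
  rw [Nat.even_iff] at h4
  rw [Nat.odd_iff]
  omega

lemma key_list {a : Perm (Fin n)} (hn : 2 ≤ n) (ha : a.IsCycle) (hs : a.support = Finset.univ)
    (x : Fin n) {i j : ℕ} (h0 : 0 < i) (hij : i < j) (hjn : j < n) :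
    (a * (Equiv.swap x ((a ^ j) x) * Equiv.swap x ((a ^ i) x))).IsCycle ∧
      (a * (Equiv.swap x ((a ^ j) x) * Equiv.swap x ((a ^ i) x))).support = Finset.univ := by
  classical
  have hnpos : 0 < n := by omega
  have hord : orderOf a = n := by rw [ha.orderOf, hs]; simp
  have hax : ∀ y : Fin n, a y ≠ y := fun y => Equiv.Perm.mem_support.1 (hs ▸ Finset.mem_univ y)
  have hinj : ∀ k l : ℕ, k < n → l < n → (a ^ k) x = (a ^ l) x → k = l := by
    intro k l hk hl he
    have h1 : a ^ k = a ^ l := (ha.pow_eq_pow_iff).2 ⟨x, hax x, he⟩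
    have h2 := pow_eq_pow_iff_modEq.mp h1
    rw [hord] at h2
    rwa [Nat.ModEq, Nat.mod_eq_of_lt hk, Nat.mod_eq_of_lt hl] at h2
  have hpowmod : ∀ k : ℕ, (a ^ (k % n)) x = (a ^ k) x := by
    intro k
    have h := pow_mod_orderOf a k
    rw [hord] at h
    rw [h]
  have hinj' : ∀ k l : ℕ, 1 ≤ k → k ≤ n → 1 ≤ l → l ≤ n → (a ^ k) x = (a ^ l) x → k = l := by
    intro k l hk1 hkn hl1 hln he
    rw [← hpowmod k, ← hpowmod l] at he
    have hm := hinj _ _ (Nat.mod_lt _ hnpos) (Nat.mod_lt _ hnpos) he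
    have hk' : k % n = k ∨ (k = n ∧ k % n = 0) := by
      rcases lt_or_eq_of_le hkn with h | h
      · exact Or.inl (Nat.mod_eq_of_lt h)
      · exact Or.inr ⟨h, by rw [h, Nat.mod_self]⟩
    have hl' : l % n = l ∨ (l = n ∧ l % n = 0) := by
      rcases lt_or_eq_of_le hln with h | h
      · exact Or.inl (Nat.mod_eq_of_lt h)
      · exact Or.inr ⟨h, by rw [h, Nat.mod_self]⟩
    rcases hk' with hk' | hk' <;> rcases hl' with hl' | hl' <;> omega
  have hxn : (a ^ n) x = x := by
    have h := pow_orderOf_eq_one a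
    rw [hord] at h
    rw [h]; rfl
  have hstep : ∀ k : ℕ, a ((a ^ k) x) = (a ^ (k + 1)) x := by
    intro k; rw [pow_succ', Perm.mul_apply]
  set q := (a ^ i) x with hq
  set r := (a ^ j) x with hr
  set u := Equiv.swap x r * Equiv.swap x q with hu
  have hxq : x ≠ q := by
    intro h
    have : (a ^ n) x = (a ^ i) x := by rw [hxn, ← hq, ← h]
    have := hinj' n i (by omega) le_rfl (by omega) (by omega) this
    omega
  have hxr : x ≠ r := by
    intro h
    have : (a ^ n) x = (a ^ j) x := by rw [hxn, ← hr, ← h]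
    have := hinj' n j (by omega) le_rfl (by omega) (by omega) this
    omega
  have hqr : q ≠ r := by
    intro h
    rw [hq, hr] at h
    have := hinj' i j (by omega) (by omega) (by omega) (by omega) h
    omega
  have hux : u x = q := by
    rw [hu, Perm.mul_apply, Equiv.swap_apply_left,
      Equiv.swap_apply_of_ne_of_ne (Ne.symm hxq) hqr]
  have huq : u q = r := by
    rw [hu, Perm.mul_apply, Equiv.swap_apply_right, Equiv.swap_apply_left]
  have hur : u r = x := by
    rw [hu, Perm.mul_apply, Equiv.swap_apply_of_ne_of_ne (Ne.symm hxr) (Ne.symm hqr),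
      Equiv.swap_apply_right]
  have hufix : ∀ w, w ≠ x → w ≠ q → w ≠ r → u w = w := by
    intro w h1 h2 h3
    rw [hu, Perm.mul_apply, Equiv.swap_apply_of_ne_of_ne h1 h2,
      Equiv.swap_apply_of_ne_of_ne h1 h3]
  have hufix' : ∀ k, 1 ≤ k → k ≤ n → k ≠ i → k ≠ j → k ≠ n → u ((a ^ k) x) = (a ^ k) x := by
    intro k h1 h2 h3 h4 h5
    apply hufix
    · intro h
      have : (a ^ k) x = (a ^ n) x := by rw [hxn]; exact h
      exact h5 (hinj' k n h1 h2 (by omega) le_rfl this)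
    · intro h
      rw [hq] at h
      exact h3 (hinj' k i h1 h2 (by omega) (by omega) h)
    · intro h
      rw [hr] at h
      exact h4 (hinj' k j h1 h2 (by omega) (by omega) h)
  set I : List ℕ :=
    List.range' 1 i ++ (List.range' (j + 1) (n - j) ++ List.range' (i + 1) (j - i)) with hI
  have hIlen : I.length = n := by simp [hI]; omega
  have hInodup : I.Nodup := by
    rw [hI]
    refine List.Nodup.append (List.nodup_range') (List.Nodup.append (List.nodup_range')
      (List.nodup_range') ?_) ?_
    · intro t ht1 ht2
      rw [List.mem_range'_1] at ht1 ht2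
      omega
    · intro t ht1 ht2
      rw [List.mem_range'_1] at ht1
      rw [List.mem_append, List.mem_range'_1, List.mem_range'_1] at ht2
      omega
  have hImem : ∀ k ∈ I, 1 ≤ k ∧ k ≤ n := by
    intro k hk
    rw [hI] at hk
    simp only [List.mem_append, List.mem_range'_1] at hk
    rcases hk with h | h | h <;> omega
  set L : List (Fin n) := I.map (fun k => (a ^ k) x) with hL
  have hLlen : L.length = n := by rw [hL, List.length_map, hIlen]
  have hLnodup : L.Nodup := by
    rw [hL]
    refine List.Nodup.map_on ?_ hInodup
    intro k hk l hl he
    obtain ⟨hk1, hk2⟩ := hImem k hk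
    obtain ⟨hl1, hl2⟩ := hImem l hl
    exact hinj' k l hk1 hk2 hl1 hl2 he
  have hLuniv : L.toFinset = Finset.univ :=
    Finset.eq_univ_of_card _
      (by rw [List.toFinset_card_of_nodup hLnodup, hLlen, Fintype.card_fin])
  have hIget : ∀ (t : ℕ) (ht : t < I.length),
      I[t] = if t < i then t + 1
        else if t < i + (n - j) then j + 1 + (t - i) else i + 1 + (t - i - (n - j)) := by
    intro t ht
    have htn : t < n := by rwa [hIlen] at ht
    by_cases h1 : t < i
    · rw [if_pos h1]
      simp only [hI]
      rw [List.getElem_append_left (by simpa using h1)]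
      rw [List.getElem_range']
      omega
    · rw [if_neg h1]
      by_cases h2 : t < i + (n - j)
      · rw [if_pos h2]
        simp only [hI]
        rw [List.getElem_append_right (by simpa using not_lt.1 h1)]
        rw [List.getElem_append_left (by simp; omega)]
        rw [List.getElem_range']
        simp only [List.length_range']
        omega
      · rw [if_neg h2]
        simp only [hI]
        rw [List.getElem_append_right (by simpa using not_lt.1 h1)]
        rw [List.getElem_append_right (by simp; omega)]
        rw [List.getElem_range']
        simp only [List.length_range']
        omega
  have eL : ∀ (t : ℕ) (ht : t < L.length),
      L[t] = (a ^ (if t < i then t + 1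
        else if t < i + (n - j) then j + 1 + (t - i) else i + 1 + (t - i - (n - j)))) x := by
    intro t ht
    simp only [hL, List.getElem_map]
    rw [hIget t (by rwa [hIlen, ← hLlen])]
  have hkey : ∀ (t : ℕ) (ht : t < L.length),
      (a * u) L[t] = L[(t + 1) % L.length]'(Nat.mod_lt _ (by rw [hLlen]; omega)) := by
    intro t ht
    have htn : t < n := by rwa [hLlen] at ht
    rw [eL t ht, eL ((t + 1) % L.length) (Nat.mod_lt _ (by rw [hLlen]; omega))]
    simp only [hLlen]
    rw [Perm.mul_apply]
    by_cases hA : t < i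
    · rw [if_pos hA]
      by_cases hA1 : t + 1 < i
      · have hm : (t + 1) % n = t + 1 := Nat.mod_eq_of_lt (by omega)
        rw [hm, if_pos hA1]
        rw [hufix' (t + 1) (by omega) (by omega) (by omega) (by omega) (by omega), hstep]
      · have hti : t + 1 = i := by omega
        have hm : (t + 1) % n = t + 1 := Nat.mod_eq_of_lt (by omega)
        rw [hm, if_neg (by omega), if_pos (by omega)]
        rw [hti, ← hq, huq, hr, hstep]
        rw [show j + 1 + (i - i) = j + 1 from by omega]
    · rw [if_neg hA]
      by_cases hB : t < i + (n - j)
      · rw [if_pos hB]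
        by_cases hB1 : t + 1 < i + (n - j)
        · have hm : (t + 1) % n = t + 1 := Nat.mod_eq_of_lt (by omega)
          rw [hm, if_neg (by omega), if_pos hB1]
          rw [hufix' (j + 1 + (t - i)) (by omega) (by omega) (by omega) (by omega) (by omega),
            hstep]
          rw [show j + 1 + (t + 1 - i) = j + 1 + (t - i) + 1 from by omega]
        · have hkn : j + 1 + (t - i) = n := by omega
          have hm : (t + 1) % n = t + 1 := Nat.mod_eq_of_lt (by omega)
          rw [hm, if_neg (by omega), if_neg (by omega)]
          rw [hkn, hxn, hux, hq, hstep]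
          rw [show i + 1 + (t + 1 - i - (n - j)) = i + 1 from by omega]
      · rw [if_neg hB]
        by_cases hC1 : t + 1 < n
        · have hm : (t + 1) % n = t + 1 := Nat.mod_eq_of_lt hC1
          rw [hm, if_neg (by omega), if_neg (by omega)]
          rw [hufix' (i + 1 + (t - i - (n - j))) (by omega) (by omega) (by omega) (by omega)
            (by omega), hstep]
          rw [show i + 1 + (t + 1 - i - (n - j)) = i + 1 + (t - i - (n - j)) + 1 from by omega]
        · have hm : (t + 1) % n = 0 := by rw [show t + 1 = n by omega, Nat.mod_self]
          have hkj : i + 1 + (t - i - (n - j)) = j := by omega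
          rw [hm, if_pos h0, hkj, ← hr, hur]
          have : a x = (a ^ (0 + 1)) x := by rw [pow_one]
          exact this
  have hform : a * u = L.formPerm := by
    apply Equiv.ext
    intro y
    have hyL : y ∈ L := by rw [← List.mem_toFinset, hLuniv]; exact Finset.mem_univ y
    obtain ⟨t, ht, rfl⟩ := List.mem_iff_getElem.1 hyL
    rw [List.formPerm_apply_getElem _ hLnodup t ht]
    exact hkey t ht
  have hone : ∀ z : Fin n, L ≠ [z] := by
    intro z hz
    apply_fun List.length at hz
    rw [hLlen] at hz
    simp at hz
    omega
  constructor
  · rw [hform]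
    exact List.isCycle_formPerm hLnodup (by rw [hLlen]; omega)
  · rw [hform, List.support_formPerm_of_nodup L hLnodup hone, hLuniv]

lemma exists_compat_threeCycle {a : Perm (Fin n)} (hn : 2 ≤ n) (ha : a.IsCycle)
    (hs : a.support = Finset.univ) {p q r : Fin n} (hpq : p ≠ q) (hpr : p ≠ r) (hqr : q ≠ r) :
    ∃ u : Perm (Fin n),
      (u = Equiv.swap p r * Equiv.swap p q ∨ u = Equiv.swap p q * Equiv.swap p r) ∧
      (a * u).IsCycle ∧ (a * u).support = Finset.univ := by
  classical
  have hnpos : 0 < n := by omega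
  have hord : orderOf a = n := by rw [ha.orderOf, hs]; simp
  have hax : ∀ y : Fin n, a y ≠ y := fun y => Equiv.Perm.mem_support.1 (hs ▸ Finset.mem_univ y)
  have hpowmod : ∀ k : ℕ, a ^ (k % n) = a ^ k := by
    intro k
    have h := pow_mod_orderOf a k
    rwa [hord] at h
  obtain ⟨i₀, hi₀⟩ := ha.exists_pow_eq (hax p) (hax q)
  obtain ⟨j₀, hj₀⟩ := ha.exists_pow_eq (hax p) (hax r)
  set i := i₀ % n with hidef
  set j := j₀ % n with hjdef
  have hi : (a ^ i) p = q := by rw [hidef, hpowmod]; exact hi₀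
  have hj : (a ^ j) p = r := by rw [hjdef, hpowmod]; exact hj₀
  have hin : i < n := Nat.mod_lt _ hnpos
  have hjn : j < n := Nat.mod_lt _ hnpos
  have hipos : 0 < i := by
    rcases Nat.eq_zero_or_pos i with h | h
    · exfalso; apply hpq; rw [← hi, h, pow_zero]; rfl
    · exact h
  have hjpos : 0 < j := by
    rcases Nat.eq_zero_or_pos j with h | h
    · exfalso; apply hpr; rw [← hj, h, pow_zero]; rfl
    · exact h
  have hij : i ≠ j := by
    intro h
    apply hqr
    rw [← hi, ← hj, h]
  rcases lt_or_gt_of_ne hij with h | h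
  · obtain ⟨hc, hsup⟩ := key_list hn ha hs p hipos h hjn
    refine ⟨_, Or.inl ?_, hc, hsup⟩
    rw [hi, hj]
  · obtain ⟨hc, hsup⟩ := key_list hn ha hs p hjpos h hin
    refine ⟨_, Or.inr ?_, hc, hsup⟩
    rw [hi, hj]

lemma reps_merge {b : Perm (Fin n)} {p q r : Fin n}
    (hpq : ¬ b.SameCycle p q) (hpr : ¬ b.SameCycle p r) (hqr : ¬ b.SameCycle q r)
    (hp : p ∈ reps b) (hq : q ∈ reps b) (hr : r ∈ reps b)
    (hpltq : p < q) (hpltr : p < r) :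
    reps ((Equiv.swap p r * Equiv.swap p q)⁻¹ * b) = ((reps b).erase q).erase r := by
  classical
  have hpq' : p ≠ q := fun h => hpq (h ▸ Equiv.Perm.SameCycle.rfl)
  have hpr' : p ≠ r := fun h => hpr (h ▸ Equiv.Perm.SameCycle.rfl)
  have hqr' : q ≠ r := fun h => hqr (h ▸ Equiv.Perm.SameCycle.rfl)
  set u := Equiv.swap p r * Equiv.swap p q with hu
  set b' := u⁻¹ * b with hbdef
  have hb'app : ∀ z, b' z = u⁻¹ (b z) := fun z => rfl
  have huinv : u⁻¹ = Equiv.swap p q * Equiv.swap p r := by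
    rw [hu, mul_inv_rev, Equiv.swap_inv, Equiv.swap_inv]
  have huip : u⁻¹ p = r := by
    rw [huinv, Perm.mul_apply, Equiv.swap_apply_left,
      Equiv.swap_apply_of_ne_of_ne (Ne.symm hpr') (Ne.symm hqr')]
  have huiq : u⁻¹ q = p := by
    rw [huinv, Perm.mul_apply, Equiv.swap_apply_of_ne_of_ne (Ne.symm hpq') hqr',
      Equiv.swap_apply_right]
  have huir : u⁻¹ r = q := by
    rw [huinv, Perm.mul_apply, Equiv.swap_apply_right, Equiv.swap_apply_left]
  have huifix : ∀ w, w ≠ p → w ≠ q → w ≠ r → u⁻¹ w = w := by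
    intro w h1 h2 h3
    rw [huinv, Perm.mul_apply, Equiv.swap_apply_of_ne_of_ne h1 h3,
      Equiv.swap_apply_of_ne_of_ne h1 h2]
  set inM : Fin n → Prop := fun z => b.SameCycle p z ∨ b.SameCycle q z ∨ b.SameCycle r z
    with hMdef
  have hMp : inM p := Or.inl Equiv.Perm.SameCycle.rfl
  have hMq : inM q := Or.inr (Or.inl Equiv.Perm.SameCycle.rfl)
  have hMr : inM r := Or.inr (Or.inr Equiv.Perm.SameCycle.rfl)
  have hMclosed : ∀ z w, inM z → b.SameCycle z w → inM w := by
    intro z w hz hzw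
    rcases hz with h | h | h
    · exact Or.inl (h.trans hzw)
    · exact Or.inr (Or.inl (h.trans hzw))
    · exact Or.inr (Or.inr (h.trans hzw))
  have hscpow : ∀ (g : Perm (Fin n)) (z : Fin n) (k : ℕ), g.SameCycle z ((g ^ k) z) :=
    fun g z k => ⟨(k : ℤ), by rw [zpow_natCast]⟩
  have hspecM : ∀ w, (w = p ∨ w = q ∨ w = r) → inM w := by
    intro w hw
    rcases hw with h | h | h <;> subst h
    exacts [hMp, hMq, hMr]
  have hiter : ∀ (z : Fin n) (m : ℕ),
      (∀ jj, 1 ≤ jj → jj ≤ m → ¬((b ^ jj) z = p ∨ (b ^ jj) z = q ∨ (b ^ jj) z = r)) →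
      (b' ^ m) z = (b ^ m) z := by
    intro z m
    induction m with
    | zero => intro _; rfl
    | succ m ih =>
      intro hav
      have h1 : (b' ^ (m + 1)) z = b' ((b' ^ m) z) := by
        rw [pow_succ', Perm.mul_apply]
      rw [h1, ih (fun jj h1' h2' => hav jj h1' (by omega))]
      rw [hb'app]
      have h2 : b ((b ^ m) z) = (b ^ (m + 1)) z := by rw [pow_succ', Perm.mul_apply]
      rw [h2]
      have h3 := hav (m + 1) (by omega) le_rfl
      push_neg at h3
      exact huifix _ h3.1 h3.2.1 h3.2.2
  have hout : ∀ z w, ¬ inM z → b.SameCycle z w → b'.SameCycle z w := by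
    intro z w hz h
    obtain ⟨k, _, hk⟩ := h.exists_pow_eq'
    refine ⟨(k : ℤ), ?_⟩
    rw [zpow_natCast, hiter z k ?_]
    · exact hk
    · intro jj _ _ hmem
      apply hz
      exact hMclosed _ _ (hspecM _ hmem) (hscpow b z jj).symm
  have hret : ∀ z, inM z → ∃ K, 1 ≤ K ∧ ((b ^ K) z = p ∨ (b ^ K) z = q ∨ (b ^ K) z = r) := by
    intro z hz
    have hz' : ∃ s, (s = p ∨ s = q ∨ s = r) ∧ b.SameCycle z s := by
      rcases hz with h | h | h
      exacts [⟨p, Or.inl rfl, h.symm⟩, ⟨q, Or.inr (Or.inl rfl), h.symm⟩,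
        ⟨r, Or.inr (Or.inr rfl), h.symm⟩]
    obtain ⟨s, hs, hzs⟩ := hz'
    obtain ⟨k, _, hk⟩ := hzs.exists_pow_eq'
    rcases Nat.eq_zero_or_pos k with h0 | h0
    · subst h0
      have hzs' : z = s := by simpa using hk
      refine ⟨orderOf b, orderOf_pos b, ?_⟩
      rw [pow_orderOf_eq_one]
      simp only [Perm.coe_one, id_eq]
      rw [hzs']
      exact hs
    · exact ⟨k, h0, by rw [hk]; exact hs⟩
  have hfirst : ∀ z, inM z →
      ∃ s, (s = p ∨ s = q ∨ s = r) ∧ b'.SameCycle z (u⁻¹ s) ∧ b.SameCycle z s := by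
    intro z hz
    have hex := hret z hz
    obtain ⟨hK1, hKmem⟩ := Nat.find_spec hex
    set K := Nat.find hex with hKdef
    have hKmin : ∀ jj, jj < K →
        ¬(1 ≤ jj ∧ ((b ^ jj) z = p ∨ (b ^ jj) z = q ∨ (b ^ jj) z = r)) :=
      fun jj hjj => Nat.find_min hex hjj
    refine ⟨(b ^ K) z, hKmem, ?_, hscpow b z K⟩
    have hKm : (b' ^ K) z = u⁻¹ ((b ^ K) z) := by
      conv_lhs => rw [show K = K - 1 + 1 by omega]
      rw [pow_succ', Perm.mul_apply]
      rw [hiter z (K - 1) (fun jj hj1 hj2 hmem => hKmin jj (by omega) ⟨hj1, hmem⟩)]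
      rw [hb'app]
      have h2 : b ((b ^ (K - 1)) z) = (b ^ (K - 1 + 1)) z := by rw [pow_succ', Perm.mul_apply]
      rw [h2, show K - 1 + 1 = K by omega]
    exact ⟨(K : ℤ), by rw [zpow_natCast, hKm]⟩
  have hscpr : b'.SameCycle p r := by
    obtain ⟨s, hs, hsc, hbs⟩ := hfirst p hMp
    have hsp : s = p := by
      rcases hs with h | h | h
      · exact h
      · exact absurd (h ▸ hbs) hpq
      · exact absurd (h ▸ hbs) hpr
    rw [hsp, huip] at hsc
    exact hsc
  have hscrq : b'.SameCycle r q := by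
    obtain ⟨s, hs, hsc, hbs⟩ := hfirst r hMr
    have hsr : s = r := by
      rcases hs with h | h | h
      · exact absurd (h ▸ hbs).symm hpr
      · exact absurd (h ▸ hbs).symm hqr
      · exact h
    rw [hsr, huir] at hsc
    exact hsc
  have hscpq : b'.SameCycle p q := hscpr.trans hscrq
  have hMconn : ∀ z, inM z → b'.SameCycle p z := by
    intro z hz
    obtain ⟨s, hs, hsc, hbs⟩ := hfirst z hz
    have hps : b'.SameCycle p (u⁻¹ s) := by
      rcases hs with h | h | h <;> subst h
      · rw [huip]; exact hscpr
      · rw [huiq]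
      · rw [huir]; exact hscpq
    exact hps.trans hsc.symm
  have hstep1 : ∀ z, b.SameCycle z (b' z) ∨ (inM z ∧ inM (b' z)) := by
    intro z
    by_cases hbz : b z = p ∨ b z = q ∨ b z = r
    · right
      have h1 : inM (b z) := hspecM _ hbz
      have h2 : inM z := hMclosed _ _ h1 ⟨-1, by simp⟩
      refine ⟨h2, ?_⟩
      rw [hb'app]
      rcases hbz with h | h | h <;> rw [h]
      · rw [huip]; exact hMr
      · rw [huiq]; exact hMp
      · rw [huir]; exact hMq
    · left
      push_neg at hbz
      rw [hb'app, huifix _ hbz.1 hbz.2.1 hbz.2.2]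
      exact ⟨1, by simp⟩
  have hforward : ∀ z w, b'.SameCycle z w → b.SameCycle z w ∨ (inM z ∧ inM w) := by
    intro z w h
    obtain ⟨k, _, hk⟩ := h.exists_pow_eq'
    have hind : ∀ m : ℕ, b.SameCycle z ((b' ^ m) z) ∨ (inM z ∧ inM ((b' ^ m) z)) := by
      intro m
      induction m with
      | zero =>
        left
        rw [pow_zero]
        exact Equiv.Perm.SameCycle.rfl
      | succ m ih =>
        have hsm : (b' ^ (m + 1)) z = b' ((b' ^ m) z) := by rw [pow_succ', Perm.mul_apply]
        rcases ih with ih | ih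
        · rcases hstep1 ((b' ^ m) z) with h1 | h1
          · left; rw [hsm]; exact ih.trans h1
          · right
            refine ⟨hMclosed _ _ h1.1 ih.symm, ?_⟩
            rw [hsm]; exact h1.2
        · rcases hstep1 ((b' ^ m) z) with h1 | h1
          · right
            refine ⟨ih.1, ?_⟩
            rw [hsm]
            exact hMclosed _ _ ih.2 h1
          · right; exact ⟨ih.1, by rw [hsm]; exact h1.2⟩
    rw [← hk]
    exact hind k
  have hple : ∀ w, inM w → p ≤ w := by
    intro w hw
    rcases hw with h | h | h
    · exact mem_reps.1 hp w h
    · exact le_trans hpltq.le (mem_reps.1 hq w h)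
    · exact le_trans hpltr.le (mem_reps.1 hr w h)
  ext z
  simp only [Finset.mem_erase, mem_reps]
  by_cases hz : inM z
  · have hcls : ∀ w, b'.SameCycle z w ↔ inM w := by
      intro w
      constructor
      · intro h
        rcases hforward z w h with h' | h'
        · exact hMclosed z w hz h'
        · exact h'.2
      · intro hw
        exact (hMconn z hz).symm.trans (hMconn w hw)
    constructor
    · intro hzrep
      have hzp : z = p := le_antisymm (hzrep p ((hcls p).2 hMp)) (hple z hz)
      subst hzp
      exact ⟨hpr', hpq', mem_reps.1 hp⟩
    · rintro ⟨hzr, hzq, hzrep⟩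
      have hzin : z = p ∨ z = q ∨ z = r := by
        rcases hz with h | h | h
        · exact Or.inl (reps_eq_of_sameCycle hp (mem_reps.2 hzrep) h).symm
        · exact Or.inr (Or.inl (reps_eq_of_sameCycle hq (mem_reps.2 hzrep) h).symm)
        · exact Or.inr (Or.inr (reps_eq_of_sameCycle hr (mem_reps.2 hzrep) h).symm)
      have hzp : z = p := by
        rcases hzin with h | h | h
        exacts [h, absurd h hzq, absurd h hzr]
      subst hzp
      intro w hw
      exact hple w ((hcls w).1 hw)
  · have hcls : ∀ w, b'.SameCycle z w ↔ b.SameCycle z w := by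
      intro w
      constructor
      · intro h
        rcases hforward z w h with h' | h'
        · exact h'
        · exact absurd h'.1 hz
      · exact hout z w hz
    have hzq : z ≠ q := fun h => hz (h ▸ hMq)
    have hzr : z ≠ r := fun h => hz (h ▸ hMr)
    constructor
    · intro hzrep
      exact ⟨hzr, hzq, fun w hw => hzrep w ((hcls w).2 hw)⟩
    · rintro ⟨_, _, hzrep⟩
      exact fun w hw => hzrep w ((hcls w).1 hw)

lemma main_induction (hn : 4 ≤ n) : ∀ (k : ℕ) (a b : Perm (Fin n)), a.IsCycle →
    a.support = Finset.univ → (reps b).card = 2 * k + 1 →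
    ∃ c₁ c₂ : Perm (Fin n), c₁.IsCycle ∧ c₁.support = Finset.univ ∧
      c₂.IsCycle ∧ c₂.support = Finset.univ ∧ a * b = c₁ * c₂ := by
  intro k
  induction k with
  | zero =>
    intro a b ha hs hb
    obtain ⟨w, hw⟩ := Finset.card_eq_one.1 (show (reps b).card = 1 by omega)
    have hall : ∀ z, b.SameCycle w z := by
      intro z
      obtain ⟨y, hy, hsc⟩ := exists_rep b z
      rw [hw, Finset.mem_singleton] at hy
      subst hy
      exact hsc
    have hb1 : b ≠ 1 := by
      intro h
      have : reps b = Finset.univ := by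
        apply Finset.eq_univ_of_forall
        intro z
        rw [mem_reps]
        intro y hy
        rw [h] at hy
        rw [Equiv.Perm.sameCycle_one] at hy
        exact le_of_eq hy
      rw [this, Finset.card_univ, Fintype.card_fin] at hb
      omega
    have hex : ∃ x, b x ≠ x := by
      by_contra hc
      push_neg at hc
      exact hb1 (Equiv.ext hc)
    obtain ⟨x, hx⟩ := hex
    have hbc : b.IsCycle := ⟨x, hx, fun y _ => (hall x).symm.trans (hall y)⟩
    have hbs : b.support = Finset.univ := by
      apply Finset.eq_univ_of_forall
      intro y
      rw [Equiv.Perm.mem_support]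
      intro hyfix
      have h1 : y = w := eq_of_fixed_sameCycle hyfix (hall y).symm
      have h2 : w = x := by
        subst h1
        exact eq_of_fixed_sameCycle hyfix (hall x)
      rw [← h2, ← h1] at hx
      exact hx hyfix
    exact ⟨a, b, ha, hs, hbc, hbs, rfl⟩
  | succ k ih =>
    intro a b ha hs hb
    have hcard3 : 3 ≤ (reps b).card := by omega
    have hne : (reps b).Nonempty := Finset.card_pos.1 (by omega)
    set p := (reps b).min' hne with hpdef
    have hp : p ∈ reps b := Finset.min'_mem _ _
    have hrest : 2 ≤ ((reps b).erase p).card := by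
      rw [Finset.card_erase_of_mem hp]
      omega
    obtain ⟨q, hqmem, r, hrmem, hqr0⟩ := (Finset.one_lt_card (s := (reps b).erase p)).1 (by omega)
    have hq : q ∈ reps b := Finset.mem_of_mem_erase hqmem
    have hr : r ∈ reps b := Finset.mem_of_mem_erase hrmem
    have hqp : q ≠ p := Finset.ne_of_mem_erase hqmem
    have hrp : r ≠ p := Finset.ne_of_mem_erase hrmem
    have hpltq : p < q := lt_of_le_of_ne (Finset.min'_le _ _ hq) (Ne.symm hqp)
    have hpltr : p < r := lt_of_le_of_ne (Finset.min'_le _ _ hr) (Ne.symm hrp)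
    have hpq : ¬ b.SameCycle p q := fun h => hqp (reps_eq_of_sameCycle hq hp h.symm)
    have hpr : ¬ b.SameCycle p r := fun h => hrp (reps_eq_of_sameCycle hr hp h.symm)
    have hqr : ¬ b.SameCycle q r := fun h => hqr0 (reps_eq_of_sameCycle hq hr h)
    obtain ⟨u, hor, hucyc, husup⟩ :=
      exists_compat_threeCycle (show 2 ≤ n by omega) ha hs hqp.symm hrp.symm hqr0
    have hreps' : reps (u⁻¹ * b) = ((reps b).erase q).erase r := by
      rcases hor with h | h
      · rw [h]
        exact reps_merge hpq hpr hqr hp hq hr hpltq hpltr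
      · rw [h]
        rw [reps_merge hpr hpq (fun hh => hqr hh.symm) hp hr hq hpltr hpltq]
        exact Finset.erase_right_comm
    have hcard' : (reps (u⁻¹ * b)).card = 2 * k + 1 := by
      rw [hreps', Finset.card_erase_of_mem (Finset.mem_erase.2 ⟨Ne.symm hqr0, hr⟩),
        Finset.card_erase_of_mem hq, hb]
      omega
    obtain ⟨c₁, c₂, h1, h2, h3, h4, h5⟩ := ih (a * u) (u⁻¹ * b) hucyc husup hcard'
    refine ⟨c₁, c₂, h1, h2, h3, h4, ?_⟩
    rw [← h5, mul_assoc, mul_inv_cancel_left]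

end TwoNC

theorem even_perm_product_two_cycles (n : ℕ) (hn : 4 ≤ n)
    (σ : Equiv.Perm (Fin n)) (hσ : σ ∈ alternatingGroup (Fin n)) :
    (∃ c₁ c₂ : Equiv.Perm (Fin n),
      c₁.IsCycle ∧ c₁.support = Finset.univ ∧
      c₂.IsCycle ∧ c₂.support = Finset.univ ∧ σ = c₁ * c₂) ∧
    (∃ d₁ d₂ : Equiv.Perm (Fin n),
      (∀ x, d₁ x ≠ x) ∧ (∀ x, d₂ x ≠ x) ∧ σ = d₁ * d₂) := by
  classical
  open TwoNC in
  have hn2 : 2 ≤ n := by omega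
  set a : Equiv.Perm (Fin n) := (List.finRange n).formPerm with haa
  have hand : (List.finRange n).Nodup := List.nodup_finRange n
  have hlen : (List.finRange n).length = n := List.length_finRange
  have ha : a.IsCycle := List.isCycle_formPerm hand (by rw [hlen]; omega)
  have hs : a.support = Finset.univ := by
    rw [haa, List.support_formPerm_of_nodup _ hand (fun z hz => by
      apply_fun List.length at hz; rw [hlen] at hz; simp at hz; omega),
      List.toFinset_finRange]
  set b := a⁻¹ * σ with hbb
  have hσab : σ = a * b := by rw [hbb, mul_inv_cancel_left]
  have hsiga : Equiv.Perm.sign a = (-1 : ℤˣ) ^ (n + 1) := by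
    rw [ha.sign, hs, Finset.card_univ, Fintype.card_fin, pow_succ, mul_neg_one]
  have hsigs : Equiv.Perm.sign σ = 1 := Equiv.Perm.mem_alternatingGroup.1 hσ
  have hsigab : Equiv.Perm.sign a * Equiv.Perm.sign b = 1 := by
    rw [← map_mul, ← hσab, hsigs]
  have hsigb : Equiv.Perm.sign b = (-1 : ℤˣ) ^ (n + 1) := by
    calc Equiv.Perm.sign b = (Equiv.Perm.sign a * Equiv.Perm.sign a) * Equiv.Perm.sign b := by
          rw [Int.units_mul_self, one_mul]
      _ = Equiv.Perm.sign a * (Equiv.Perm.sign a * Equiv.Perm.sign b) := by rw [mul_assoc]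
      _ = (-1 : ℤˣ) ^ (n + 1) := by rw [hsigab, mul_one, hsiga]
  obtain ⟨k, hk⟩ := odd_card_reps hn2 hsigb
  obtain ⟨c₁, c₂, h1, h2, h3, h4, h5⟩ := main_induction hn k a b ha hs (by omega)
  refine ⟨⟨c₁, c₂, h1, h2, h3, h4, by rw [hσab, h5]⟩,
    ⟨c₁, c₂, ?_, ?_, by rw [hσab, h5]⟩⟩
  · intro x
    have : x ∈ c₁.support := h2 ▸ Finset.mem_univ x
    exact Equiv.Perm.mem_support.1 this
  · intro x
    have : x ∈ c₂.support := h4 ▸ Finset.mem_univ x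
    exact Equiv.Perm.mem_support.1 this
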